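/- arXiv:1801.02061 — 7 statements merged into one kernel-verified Lean document; each statement's English description precedes it below -/
import Mathlib

section
/- For every integer N ≥ 1 and every demand d : [N] → [N], the generalized independence number and the min-rank of the induced generalized index coding problem coincide: α(d) = κ(d), and this common value equals N·N_e(d) if N_e(d) ≤ N−1, and equals N(N−1) if N_e(d) = N. -/
open Matrix

/-- Number of distinct demands `N_e(d)`. -/
def numDistinct {K N : ℕ} (d : Fin K → Fin N) : ℕ := (Finset.univ.image d).card

/-- The set `Z^{(i,j)}(d)` for the GIC problem induced by CFL prefetching (`N = K`). -/
def Zset (F : Type*) [Field F] {N : ℕ} (d : Fin N → Fin N) (i j : Fin N) :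
    Set (Matrix (Fin N) (Fin N) F) :=
  {Z | (∑ a, Z a i) = 0 ∧ Z (d i) j ≠ 0}

/-- Generalized independence number `α(d)`: the maximum dimension of a subspace
all of whose nonzero elements lie in `⋃_{i,j} Z^{(i,j)}(d)`. -/
noncomputable def alphaCFL (F : Type*) [Field F] {N : ℕ} (d : Fin N → Fin N) : ℕ :=
  sSup { k | ∃ U : Submodule F (Matrix (Fin N) (Fin N) F),
    (∀ x ∈ U, x ≠ 0 → x ∈ ⋃ i, ⋃ j, Zset F d i j) ∧ Module.finrank F U = k }

/-- The matrix `v_i` with `v_i(a,b) = 1` iff `b = i`. -/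
def vmat (F : Type*) [Field F] {N : ℕ} (i : Fin N) : Matrix (Fin N) (Fin N) F :=
  fun _ b => if b = i then 1 else 0

/-- Min-rank `κ(d)`: the minimum over all scalar choices `c` of the dimension of the
span of the matrices `E_{d(i),j} + c(i,j)·v_i`. -/
noncomputable def kappaCFL (F : Type*) [Field F] {N : ℕ} (d : Fin N → Fin N) : ℕ :=
  sInf { k | ∃ c : Fin N × Fin N → F,
    Module.finrank F (Submodule.span F
      (Set.range fun p : Fin N × Fin N =>
        Matrix.single (d p.1) p.2 (1 : F) + c p • vmat F p.1)) = k }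

section Aux

variable {F : Type*} [Field F] {N : ℕ}

/-- trace pairing -/
noncomputable def pairB : Matrix (Fin N) (Fin N) F →ₗ[F] Matrix (Fin N) (Fin N) F →ₗ[F] F :=
  LinearMap.mk₂ F (fun x y => ∑ a, ∑ b, x a b * y a b)
    (by intro x x' y; simp [add_mul, Finset.sum_add_distrib])
    (by intro c x y; simp [Finset.mul_sum, mul_assoc])
    (by intro x y y'; simp [mul_add, Finset.sum_add_distrib])
    (by intro c x y; simp [Finset.mul_sum, mul_assoc, mul_left_comm])

lemma pairB_G (d : Fin N → Fin N) (c : Fin N × Fin N → F) (x : Matrix (Fin N) (Fin N) F)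
    (p : Fin N × Fin N) :
    pairB x (Matrix.single (d p.1) p.2 (1 : F) + c p • vmat F p.1)
      = x (d p.1) p.2 + c p * ∑ a, x a p.1 := by
  simp only [pairB, LinearMap.mk₂_apply, Matrix.add_apply, Matrix.smul_apply, Matrix.single,
    vmat, of_apply, smul_eq_mul, mul_add, Finset.sum_add_distrib]
  congr 1
  · rw [Finset.sum_comm]
    simp [ite_and, Finset.sum_ite_eq]

  · simp [Finset.mul_sum, mul_ite, mul_comm]


lemma key_le (d : Fin N → Fin N) (U : Submodule F (Matrix (Fin N) (Fin N) F))
    (hU : ∀ x ∈ U, x ≠ 0 → x ∈ ⋃ i, ⋃ j, Zset F d i j) (c : Fin N × Fin N → F) :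
    Module.finrank F U ≤ Module.finrank F (Submodule.span F
      (Set.range fun p : Fin N × Fin N =>
        Matrix.single (d p.1) p.2 (1 : F) + c p • vmat F p.1)) := by
  classical
  set G := fun p : Fin N × Fin N =>
      Matrix.single (d p.1) p.2 (1 : F) + c p • vmat F p.1 with hG
  set S := Submodule.span F (Set.range G) with hS
  let A : Module.Dual F S →ₗ[F] (Fin N × Fin N → F) :=
    LinearMap.pi fun p => LinearMap.applyₗ
      (⟨G p, Submodule.subset_span (Set.mem_range_self p)⟩ : S)
  let resT : Matrix (Fin N) (Fin N) F →ₗ[F] Module.Dual F S :=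
    (LinearMap.lcomp F F S.subtype).comp pairB
  let Φ := A.comp resT
  have hΦ : ∀ x p, Φ x p = pairB x (G p) := fun x p => rfl
  have hinj : Function.Injective (Φ.domRestrict U) := by
    rw [← LinearMap.ker_eq_bot, LinearMap.ker_eq_bot']
    rintro ⟨x, hx⟩ hx0
    by_contra hne
    have hxne : x ≠ 0 := by simpa [Submodule.mk_eq_zero] using hne
    have hmem := hU x hx hxne
    simp only [Set.mem_iUnion, Zset, Set.mem_setOf_eq] at hmem
    obtain ⟨i, j, h1, h2⟩ := hmem
    have : Φ x (i, j) = 0 := by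
      have := congrFun hx0 (i, j)
      simpa using this
    rw [hΦ, pairB_G] at this
    simp only [h1, mul_zero, add_zero] at this
    exact h2 this
  calc Module.finrank F U = Module.finrank F (LinearMap.range (Φ.domRestrict U)) :=
        (LinearMap.finrank_range_of_inj hinj).symm
    _ ≤ Module.finrank F (LinearMap.range Φ) :=
        Submodule.finrank_mono (LinearMap.range_domRestrict_le_range Φ U)
    _ ≤ Module.finrank F (LinearMap.range A) :=
        Submodule.finrank_mono (LinearMap.range_comp_le_range resT A)
    _ ≤ Module.finrank F (Module.Dual F S) := LinearMap.finrank_range_le A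
    _ = Module.finrank F S := Subspace.dual_finrank_eq

variable {F : Type*} [Field F] {N : ℕ}

lemma sum_dite_mem (S : Set (Fin N)) [DecidablePred (· ∈ S)] [Fintype ↥S] (f : ↥S → F) :
    ∑ a, (if h : a ∈ S then f ⟨a, h⟩ else 0) = ∑ r : ↥S, f r := by
  classical
  have h1 := Finset.sum_subtype (p := fun x => x ∈ S) (F := ‹Fintype ↥S›) (s := S.toFinset)
    (f := fun a => if h : a ∈ S then f ⟨a, h⟩ else 0) (fun x => Set.mem_toFinset)
  have h2 : ∑ a ∈ S.toFinset, (if h : a ∈ S then f ⟨a, h⟩ else 0)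
      = ∑ a, (if h : a ∈ S then f ⟨a, h⟩ else 0) := by
    refine Finset.sum_subset (Finset.subset_univ _) (fun a _ ha => dif_neg ?_)
    simpa using ha
  rw [← h2, h1]
  refine Finset.sum_congr rfl (fun r _ => ?_)
  rw [dif_pos r.2]

lemma card_range_eq (d : Fin N → Fin N) [Fintype ↥(Set.range d)] :
    Fintype.card ↥(Set.range d) = numDistinct d := by
  classical
  rw [← Set.toFinset_card, Set.toFinset_range, numDistinct]

open scoped Classical in
/-- Case A subspace achieving `N_e · N`. -/
noncomputable def phiA (d : Fin N → Fin N) (t : Fin N) :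
    ((↥(Set.range d) × Fin N) → F) →ₗ[F] Matrix (Fin N) (Fin N) F where
  toFun y := Matrix.of fun a b =>
    (if h : a ∈ Set.range d then y (⟨a, h⟩, b) else 0) +
    (if a = t then -∑ r : ↥(Set.range d), y (r, b) else 0)
  map_add' y z := by
    ext a b
    simp only [of_apply, Matrix.add_apply, Pi.add_apply]
    split_ifs <;> simp [Finset.sum_add_distrib] <;> ring
  map_smul' c y := by
    ext a b
    simp only [of_apply, Matrix.smul_apply, Pi.smul_apply, smul_eq_mul, RingHom.id_apply]
    split_ifs <;> simp [Finset.mul_sum, mul_sub, mul_add] <;> try ring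

open scoped Classical in
lemma phiA_inj (d : Fin N → Fin N) (t : Fin N) (ht : t ∉ Set.range d) :
    Function.Injective (phiA (F := F) d t) := by
  rw [← LinearMap.ker_eq_bot, LinearMap.ker_eq_bot']
  intro y hy
  funext rb
  obtain ⟨⟨a, ha⟩, b⟩ := rb
  have h0 : phiA (F := F) d t y a b = 0 := by rw [hy]; rfl
  have hat : a ≠ t := fun h => ht (h ▸ ha)
  obtain ⟨i0, hi0⟩ := id ha
  have h1 : ∀ (x : Fin N), d x = a → y (⟨a, ha⟩, b) = 0 := by simpa [phiA, hat] using h0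
  exact h1 i0 hi0

open scoped Classical in
lemma phiA_prop (d : Fin N → Fin N) (t : Fin N) (ht : t ∉ Set.range d) :
    ∀ x ∈ LinearMap.range (phiA (F := F) d t), x ≠ 0 → x ∈ ⋃ i, ⋃ j, Zset F d i j := by
  rintro x ⟨y, rfl⟩ hx
  have hy : y ≠ 0 := by rintro rfl; simp at hx
  obtain ⟨⟨⟨a, ha⟩, b⟩, hrb⟩ := Function.ne_iff.mp hy
  obtain ⟨i, hi⟩ := ha
  simp only [Set.mem_iUnion]
  refine ⟨i, b, ?_, ?_⟩
  · -- column sum zero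
    show (∑ a', phiA (F := F) d t y a' i) = 0
    have : ∀ a', phiA (F := F) d t y a' i =
        (if h : a' ∈ Set.range d then y (⟨a', h⟩, i) else 0) +
        (if a' = t then -∑ r : ↥(Set.range d), y (r, i) else 0) := fun _ => rfl
    simp only [this]
    rw [Finset.sum_add_distrib, sum_dite_mem (Set.range d) (fun r => y (r, i)),
      Finset.sum_ite_eq' Finset.univ t (fun _ => -∑ r : ↥(Set.range d), y (r, i))]
    simp
  · -- nonzero entry
    have hdi : d i ∈ Set.range d := ⟨i, rfl⟩
    have hdt : d i ≠ t := fun h => ht (h ▸ hdi)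
    show phiA (F := F) d t y (d i) b ≠ 0
    have : phiA (F := F) d t y (d i) b = y (⟨d i, hdi⟩, b) := by
      show (if h : d i ∈ Set.range d then y (⟨d i, h⟩, b) else 0) +
        (if d i = t then -∑ r : ↥(Set.range d), y (r, b) else 0) = _
      rw [dif_pos hdi, if_neg hdt, add_zero]
    rw [this]
    have : (⟨d i, hdi⟩ : ↥(Set.range d)) = ⟨a, ⟨i, hi⟩⟩ := Subtype.ext hi
    rw [this]
    exact hrb

open scoped Classical in
/-- Case A "blocking" subspace map. -/
noncomputable def psiA (d : Fin N → Fin N) :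
    (({a : Fin N // a ∉ Set.range d} × Fin N) → F) →ₗ[F] Matrix (Fin N) (Fin N) F where
  toFun g := Matrix.of fun a b => if h : a ∈ Set.range d then 0 else g (⟨a, h⟩, b)
  map_add' y z := by ext a b; simp only [of_apply, Matrix.add_apply, Pi.add_apply]; split_ifs <;> simp
  map_smul' c y := by
    ext a b
    simp only [of_apply, Matrix.smul_apply, Pi.smul_apply, smul_eq_mul, RingHom.id_apply]
    split_ifs <;> simp

open scoped Classical in
lemma psiA_inj (d : Fin N → Fin N) : Function.Injective (psiA (F := F) d) := by
  rw [← LinearMap.ker_eq_bot, LinearMap.ker_eq_bot']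
  intro g hg
  funext rb
  obtain ⟨⟨a, ha⟩, b⟩ := rb
  have h0 : psiA (F := F) d g a b = 0 := by rw [hg]; rfl
  have h1 : ∀ (_ : ∀ x : Fin N, ¬ d x = a), g (⟨a, ha⟩, b) = 0 := by simpa [psiA] using h0
  exact h1 (by simpa [Set.mem_range] using ha)

open scoped Classical in
lemma psiA_prop (d : Fin N → Fin N) :
    ∀ x ∈ LinearMap.range (psiA (F := F) d), x ∉ ⋃ i, ⋃ j, Zset F d i j := by
  rintro x ⟨g, rfl⟩ hx
  simp only [Set.mem_iUnion, Zset, Set.mem_setOf_eq] at hx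
  obtain ⟨i, j, _, h2⟩ := hx
  exact h2 (by simp [psiA, Set.mem_range_self i])

/-- Column sum map. -/
noncomputable def colSum : Matrix (Fin N) (Fin N) F →ₗ[F] (Fin N → F) where
  toFun x := fun b => ∑ a, x a b
  map_add' x y := by ext b; simp [Finset.sum_add_distrib]
  map_smul' c x := by ext b; simp [Finset.mul_sum]

lemma colSum_surj (hN : 1 ≤ N) : Function.Surjective (colSum (F := F) (N := N)) := by
  intro g
  refine ⟨Matrix.of fun a b => if a = (⟨0, hN⟩ : Fin N) then g b else 0, ?_⟩
  funext b
  simp [colSum, Finset.sum_ite_eq']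

/-- Case B "blocking" subspace map. -/
noncomputable def psiB (e : Fin N → Fin N) : (Fin N → F) →ₗ[F] Matrix (Fin N) (Fin N) F where
  toFun t := Matrix.of fun a b => if b = e a then t a else 0
  map_add' y z := by ext a b; simp only [of_apply, Matrix.add_apply, Pi.add_apply]; split_ifs <;> simp
  map_smul' c y := by
    ext a b
    simp only [of_apply, Matrix.smul_apply, Pi.smul_apply, smul_eq_mul, RingHom.id_apply]
    split_ifs <;> simp

lemma psiB_inj (e : Fin N → Fin N) : Function.Injective (psiB (F := F) e) := by
  rw [← LinearMap.ker_eq_bot, LinearMap.ker_eq_bot']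
  intro t ht
  funext a
  have h0 : psiB (F := F) e t a (e a) = 0 := by rw [ht]; rfl
  simpa [psiB] using h0

lemma psiB_prop (d e : Fin N → Fin N) (hde : ∀ a, d (e a) = a) (hed : ∀ i, e (d i) = i) :
    ∀ x ∈ LinearMap.range (psiB (F := F) e), x ∉ ⋃ i, ⋃ j, Zset F d i j := by
  rintro x ⟨t, rfl⟩ hx
  simp only [Set.mem_iUnion, Zset, Set.mem_setOf_eq] at hx
  obtain ⟨i, j, h1, h2⟩ := hx
  have hent : psiB (F := F) e t (d i) j = if j = i then t (d i) else 0 := by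
    simp [psiB, hed i]
  rw [hent] at h2
  have hji : j = i := by by_contra h; exact h2 (if_neg h)
  subst hji
  rw [if_pos rfl] at h2
  apply h2
  have : ∀ a, psiB (F := F) e t a j = if a = d j then t a else 0 := by
    intro a
    simp only [psiB, LinearMap.coe_mk, AddHom.coe_mk, of_apply]
    by_cases h : a = d j
    · subst h; simp [hed]
    · have : j ≠ e a := fun hh => h (by rw [hh, hde])
      simp [this, h]
  calc t (d j) = ∑ a, if a = d j then t a else 0 := by rw [Finset.sum_ite_eq' Finset.univ (d j) t]; simp
    _ = ∑ a, psiB (F := F) e t a j := by simp only [this]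
    _ = 0 := h1

lemma vmat_eq_sum_std (i : Fin N) : vmat F i = ∑ a, Matrix.single a i (1 : F) := by
  ext a' b
  simp only [vmat, Matrix.sum_apply, Matrix.single, of_apply, ite_and]
  rw [Finset.sum_ite_eq' Finset.univ a' (fun _ => if i = b then (1:F) else 0)]
  simp [eq_comm]

lemma vmat_eq_sum_d (d : Fin N → Fin N) (hbij : Function.Bijective d) (i : Fin N) :
    vmat F i = ∑ i', Matrix.single (d i') i (1 : F) := by
  rw [vmat_eq_sum_std, Fintype.sum_bijective d hbij
    (fun i' => Matrix.single (d i') i (1:F)) (fun a => Matrix.single a i (1:F)) (fun _ => rfl)]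

open scoped Classical in
lemma span_bound_A (d : Fin N → Fin N) :
    Module.finrank F (Submodule.span F
      (Set.range fun p : Fin N × Fin N =>
        Matrix.single (d p.1) p.2 (1 : F) + (fun _ : Fin N × Fin N => (0:F)) p • vmat F p.1))
      ≤ numDistinct d * N := by
  classical
  set H : (↥(Set.range d) × Fin N) → Matrix (Fin N) (Fin N) F :=
    fun q => Matrix.single q.1.1 q.2 (1 : F) with hH
  have hle : Submodule.span F (Set.range fun p : Fin N × Fin N =>
      Matrix.single (d p.1) p.2 (1 : F) + (fun _ : Fin N × Fin N => (0:F)) p • vmat F p.1)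
      ≤ Submodule.span F (Set.range H) := by
    rw [Submodule.span_le]
    rintro _ ⟨p, rfl⟩
    apply Submodule.subset_span
    exact ⟨(⟨d p.1, ⟨p.1, rfl⟩⟩, p.2), by simp [hH]⟩
  calc Module.finrank F (Submodule.span F _) ≤ Module.finrank F (Submodule.span F (Set.range H)) :=
        Submodule.finrank_mono hle
    _ ≤ Fintype.card (↥(Set.range d) × Fin N) := finrank_range_le_card H
    _ = numDistinct d * N := by rw [Fintype.card_prod, Fintype.card_fin, card_range_eq]

open scoped Classical in
lemma span_bound_B (d : Fin N → Fin N) (hbij : Function.Bijective d) :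
    Module.finrank F (Submodule.span F
      (Set.range fun p : Fin N × Fin N =>
        Matrix.single (d p.1) p.2 (1 : F) +
          (fun q : Fin N × Fin N => if q.2 = q.1 then (-1 : F) else 0) p • vmat F p.1))
      ≤ N * N - N := by
  classical
  set H : {p : Fin N × Fin N // p.2 ≠ p.1} → Matrix (Fin N) (Fin N) F :=
    fun q => Matrix.single (d q.1.1) q.1.2 (1 : F) with hH
  have hmem : ∀ p : Fin N × Fin N,
      (Matrix.single (d p.1) p.2 (1 : F) +
        (if p.2 = p.1 then (-1 : F) else 0) • vmat F p.1) ∈ Submodule.span F (Set.range H) := by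
    intro p
    by_cases h : p.2 = p.1
    · rw [if_pos h, ← h]
      have expand : Matrix.single (d p.2) p.2 (1 : F) + (-1 : F) • vmat F p.2
          = -∑ i' ∈ Finset.univ.erase p.2, Matrix.single (d i') p.2 (1:F) := by
        rw [vmat_eq_sum_d d hbij, ← Finset.add_sum_erase Finset.univ _ (Finset.mem_univ p.2)]
        simp [neg_add_rev]
        abel
      rw [expand]
      refine Submodule.neg_mem _ (Submodule.sum_mem _ (fun i' hi' => ?_))
      apply Submodule.subset_span
      exact ⟨⟨(i', p.2), (Finset.ne_of_mem_erase hi').symm⟩, rfl⟩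
    · rw [if_neg h, zero_smul, add_zero]
      exact Submodule.subset_span ⟨⟨p, h⟩, rfl⟩
  have hle : Submodule.span F (Set.range fun p : Fin N × Fin N =>
      Matrix.single (d p.1) p.2 (1 : F) +
        (fun q : Fin N × Fin N => if q.2 = q.1 then (-1 : F) else 0) p • vmat F p.1)
      ≤ Submodule.span F (Set.range H) := by
    rw [Submodule.span_le]
    rintro _ ⟨p, rfl⟩
    exact hmem p
  have hcard : Fintype.card {p : Fin N × Fin N // p.2 ≠ p.1} = N * N - N := by
    have h1 : Fintype.card {p : Fin N × Fin N // p.2 = p.1} = N := by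
      rw [Fintype.card_congr (⟨fun q => q.1.1, fun i => ⟨(i, i), rfl⟩,
        fun q => Subtype.ext (Prod.ext rfl q.2.symm), fun i => rfl⟩ :
          {p : Fin N × Fin N // p.2 = p.1} ≃ Fin N)]
      simp
    have := Fintype.card_subtype_compl (fun p : Fin N × Fin N => p.2 = p.1)
    rw [this, h1]
    simp
  calc Module.finrank F (Submodule.span F _) ≤ Module.finrank F (Submodule.span F (Set.range H)) :=
        Submodule.finrank_mono hle
    _ ≤ Fintype.card {p : Fin N × Fin N // p.2 ≠ p.1} := finrank_range_le_card H
    _ = N * N - N := hcard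

lemma finrank_mat : Module.finrank F (Matrix (Fin N) (Fin N) F) = N * N := by
  rw [Module.finrank_matrix]
  simp

lemma disjoint_bound (d : Fin N → Fin N) (U W : Submodule F (Matrix (Fin N) (Fin N) F))
    (hU : ∀ x ∈ U, x ≠ 0 → x ∈ ⋃ i, ⋃ j, Zset F d i j)
    (hW : ∀ x ∈ W, x ∉ ⋃ i, ⋃ j, Zset F d i j) :
    Module.finrank F U + Module.finrank F W ≤ N * N := by
  have hdisj : U ⊓ W = ⊥ := by
    rw [Submodule.eq_bot_iff]
    rintro x ⟨hxU, hxW⟩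
    by_contra hx
    exact hW x hxW (hU x hxU hx)
  have h := Submodule.finrank_sup_add_finrank_inf_eq U W
  rw [hdisj, finrank_bot, add_zero] at h
  rw [← h]
  exact (Submodule.finrank_le (U ⊔ W)).trans finrank_mat.le

def ASet (F : Type*) [Field F] {N : ℕ} (d : Fin N → Fin N) : Set ℕ :=
  { k | ∃ U : Submodule F (Matrix (Fin N) (Fin N) F),
    (∀ x ∈ U, x ≠ 0 → x ∈ ⋃ i, ⋃ j, Zset F d i j) ∧ Module.finrank F U = k }

def KSet (F : Type*) [Field F] {N : ℕ} (d : Fin N → Fin N) : Set ℕ :=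
  { k | ∃ c : Fin N × Fin N → F,
    Module.finrank F (Submodule.span F
      (Set.range fun p : Fin N × Fin N =>
        Matrix.single (d p.1) p.2 (1 : F) + c p • vmat F p.1)) = k }

lemma alphaCFL_def (d : Fin N → Fin N) : alphaCFL F d = sSup (ASet F d) := rfl
lemma kappaCFL_def (d : Fin N → Fin N) : kappaCFL F d = sInf (KSet F d) := rfl

lemma alpha_value (d : Fin N → Fin N) (v : ℕ) (hmem : v ∈ ASet F d)
    (hub : ∀ k ∈ ASet F d, k ≤ v) : alphaCFL F d = v := by
  rw [alphaCFL_def]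
  exact le_antisymm (csSup_le ⟨v, hmem⟩ hub) (le_csSup ⟨v, fun k hk => hub k hk⟩ hmem)

lemma kappa_value (d : Fin N → Fin N) (v : ℕ) (hmem : v ∈ ASet F d)
    (hub : ∀ k ∈ ASet F d, k ≤ v) (c₀ : Fin N × Fin N → F)
    (hc₀ : Module.finrank F (Submodule.span F
      (Set.range fun p : Fin N × Fin N =>
        Matrix.single (d p.1) p.2 (1 : F) + c₀ p • vmat F p.1)) ≤ v) :
    kappaCFL F d = v := by
  rw [kappaCFL_def]
  have hne : (KSet F d).Nonempty := ⟨_, ⟨c₀, rfl⟩⟩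
  have hmem' : Module.finrank F (Submodule.span F
      (Set.range fun p : Fin N × Fin N =>
        Matrix.single (d p.1) p.2 (1 : F) + c₀ p • vmat F p.1)) ∈ KSet F d := ⟨c₀, rfl⟩
  refine le_antisymm ((Nat.sInf_le hmem').trans hc₀) (le_csInf hne ?_)
  rintro m ⟨c, rfl⟩
  obtain ⟨U, hU, rfl⟩ := hmem
  exact key_le d U hU c

end Aux

theorem alpha_eq_kappa_CFL_NeqK (F : Type*) [Field F] [Fintype F]
    (N : ℕ) (hN : 1 ≤ N) (d : Fin N → Fin N) :
    alphaCFL F d = kappaCFL F d ∧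
    (numDistinct d ≤ N - 1 → alphaCFL F d = N * numDistinct d) ∧
    (numDistinct d = N → alphaCFL F d = N * (N - 1)) := by
  classical
  have hNpos : 0 < N := hN
  have hNe_le : numDistinct d ≤ N := by
    simpa [numDistinct] using (Finset.card_image_le (s := Finset.univ) (f := d)).trans (by simp)
  by_cases hsurj : numDistinct d = N
  · -- surjective case
    have himg : Finset.univ.image d = Finset.univ :=
      Finset.eq_univ_of_card _ (by simpa [numDistinct] using hsurj)
    have hsurj' : Function.Surjective d := by
      intro a
      have ha : a ∈ Finset.univ.image d := by rw [himg]; exact Finset.mem_univ a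
      simpa [Finset.mem_image] using ha
    have hbij : Function.Bijective d :=
      (Fintype.bijective_iff_surjective_and_card d).mpr ⟨hsurj', rfl⟩
    set e := Function.surjInv hsurj' with he
    have hde : ∀ a, d (e a) = a := fun a => Function.surjInv_eq hsurj' a
    have hed : ∀ i, e (d i) = i := fun i => hbij.1 (hde (d i))
    have hkerprop : ∀ x ∈ LinearMap.ker (colSum (F := F) (N := N)), x ≠ 0 →
        x ∈ ⋃ i, ⋃ j, Zset F d i j := by
      intro x hx hxne
      obtain ⟨a, ha⟩ := Function.ne_iff.mp hxne
      obtain ⟨b, hb⟩ := Function.ne_iff.mp ha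
      simp only [Set.mem_iUnion, Zset, Set.mem_setOf_eq]
      refine ⟨e a, b, ?_, ?_⟩
      · have h0 := congrFun (LinearMap.mem_ker.mp hx) (e a)
        simpa [colSum] using h0
      · rw [hde]; simpa using hb
    have hkerrank : Module.finrank F (LinearMap.ker (colSum (F := F) (N := N))) = N * N - N := by
      have h1 := LinearMap.finrank_range_add_finrank_ker (colSum (F := F) (N := N))
      rw [LinearMap.range_eq_top.mpr (colSum_surj hN), finrank_top,
        Module.finrank_fintype_fun_eq_card, Fintype.card_fin, finrank_mat] at h1
      omega
    have hmem : (N * N - N) ∈ ASet F d := ⟨_, hkerprop, hkerrank⟩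
    have hub : ∀ k ∈ ASet F d, k ≤ N * N - N := by
      rintro k ⟨U, hU, rfl⟩
      have hWrank : Module.finrank F (LinearMap.range (psiB (F := F) e)) = N := by
        rw [LinearMap.finrank_range_of_inj (psiB_inj e),
          Module.finrank_fintype_fun_eq_card, Fintype.card_fin]
      have hdb := disjoint_bound d U _ hU (psiB_prop d e hde hed)
      omega
    have hA : alphaCFL F d = N * N - N := alpha_value d _ hmem hub
    have hK : kappaCFL F d = N * N - N :=
      kappa_value d _ hmem hub (fun q => if q.2 = q.1 then (-1 : F) else 0) (span_bound_B d hbij)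
    have harith : N * (N - 1) = N * N - N := by
      symm
      refine Nat.sub_eq_of_eq_add ?_
      rw [← Nat.mul_succ]
      congr 1
      omega
    exact ⟨by rw [hA, hK], fun h => absurd hsurj (by omega), fun _ => by rw [hA, harith]⟩
  · -- non-surjective case
    obtain ⟨t, ht⟩ : ∃ t, t ∉ Set.range d := by
      by_contra hc
      push_neg at hc
      refine hsurj ?_
      have : Finset.univ.image d = Finset.univ := by
        refine Finset.eq_univ_iff_forall.mpr fun a => ?_
        obtain ⟨i, hi⟩ := hc a
        exact Finset.mem_image.mpr ⟨i, Finset.mem_univ i, hi⟩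
      rw [numDistinct, this, Finset.card_univ, Fintype.card_fin]
    have hUrank : Module.finrank F (LinearMap.range (phiA (F := F) d t)) = N * numDistinct d := by
      rw [LinearMap.finrank_range_of_inj (phiA_inj d t ht), Module.finrank_fintype_fun_eq_card,
        Fintype.card_prod, Fintype.card_fin, card_range_eq, mul_comm]
    have hmem : (N * numDistinct d) ∈ ASet F d := ⟨_, phiA_prop d t ht, hUrank⟩
    have hub : ∀ k ∈ ASet F d, k ≤ N * numDistinct d := by
      rintro k ⟨U, hU, rfl⟩
      have hWrank : Module.finrank F (LinearMap.range (psiA (F := F) d))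
          = (N - numDistinct d) * N := by
        have h2 : Fintype.card {a : Fin N // a ∈ Set.range d} = numDistinct d := card_range_eq d
        rw [LinearMap.finrank_range_of_inj (psiA_inj d), Module.finrank_fintype_fun_eq_card,
          Fintype.card_prod, Fintype.card_fin, Fintype.card_subtype_compl, Fintype.card_fin, h2]
      have hdb := disjoint_bound d U _ hU (psiA_prop d)
      rw [hWrank] at hdb
      have he1 : (N - numDistinct d) * N + numDistinct d * N = N * N := by
        rw [← Nat.add_mul, Nat.sub_add_cancel hNe_le]
      have he2 : numDistinct d * N = N * numDistinct d := mul_comm _ _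
      linarith
    have hA : alphaCFL F d = N * numDistinct d := alpha_value d _ hmem hub
    have hK : kappaCFL F d = N * numDistinct d :=
      kappa_value d _ hmem hub (fun _ => (0 : F))
        ((span_bound_A d).trans (le_of_eq (mul_comm _ _)))
    exact ⟨by rw [hA, hK], fun _ => hA, fun h => absurd h hsurj⟩
end

section
/- If the demand d : [N] → [N] is a bijection (i.e., N_e(d) = N), then the generalized independence number satisfies α(d) ≥ N(N−1). -/
open Matrix

theorem alpha_ge_of_bijective (F : Type*) [Field F] [Fintype F]
    (N : ℕ) (hN : 1 ≤ N) (d : Fin N → Fin N) (hd : Function.Bijective d) :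
    N * (N - 1) ≤ alphaCFL F d := by
  classical
  let L : Matrix (Fin N) (Fin N) F →ₗ[F] (Fin N → F) :=
    { toFun := fun x i => ∑ a, x a i
      map_add' := by intro x y; funext i; simp [Finset.sum_add_distrib]
      map_smul' := by intro c x; funext i; simp [Finset.mul_sum] }
  have hsurj : Function.Surjective L := by
    intro v
    refine ⟨fun a i => if a = ⟨0, hN⟩ then v i else 0, ?_⟩
    funext i
    simp [L]
  have hrank : Module.finrank F (LinearMap.ker L) = N * N - N := by
    have h1 := LinearMap.finrank_range_add_finrank_ker L
    have h2 : Module.finrank F (LinearMap.range L) = N := by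
      rw [LinearMap.range_eq_top.mpr hsurj]
      simp [finrank_top]
    have h3 : Module.finrank F (Matrix (Fin N) (Fin N) F) = N * N := by
      simp [Module.finrank_matrix]
    omega
  have hmem : N * (N - 1) ∈ { k | ∃ U : Submodule F (Matrix (Fin N) (Fin N) F),
      (∀ x ∈ U, x ≠ 0 → x ∈ ⋃ i, ⋃ j, Zset F d i j) ∧ Module.finrank F U = k } := by
    refine ⟨LinearMap.ker L, ?_, ?_⟩
    · intro x hx hx0
      have : ∃ a b, x a b ≠ 0 := by
        by_contra h
        push_neg at h
        exact hx0 (by ext a b; simpa using h a b)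
      obtain ⟨a, b, hab⟩ := this
      obtain ⟨i, hi⟩ := hd.2 a
      refine Set.mem_iUnion.2 ⟨i, Set.mem_iUnion.2 ⟨b, ?_⟩⟩
      constructor
      · have := congrFun (LinearMap.mem_ker.mp hx) i
        simpa [L] using this
      · rw [hi]; exact hab
    · rw [hrank, Nat.mul_sub]
      ring_nf
  have hbdd : BddAbove { k | ∃ U : Submodule F (Matrix (Fin N) (Fin N) F),
      (∀ x ∈ U, x ≠ 0 → x ∈ ⋃ i, ⋃ j, Zset F d i j) ∧ Module.finrank F U = k } := by
    refine ⟨Module.finrank F (Matrix (Fin N) (Fin N) F), ?_⟩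
    rintro k ⟨U, -, rfl⟩
    exact Submodule.finrank_le U
  exact le_csSup hbdd hmem
end

section
/- If the demand d : [N] → [N] satisfies N_e(d) ≤ N−1, then the generalized independence number satisfies α(d) ≥ N·N_e(d). -/
open Matrix

theorem alpha_ge_of_not_all_distinct (F : Type*) [Field F] [Fintype F]
    (N : ℕ) (hN : 1 ≤ N) (d : Fin N → Fin N) (hd : numDistinct d ≤ N - 1) :
    N * numDistinct d ≤ alphaCFL F d := by
  classical
  set D : Finset (Fin N) := Finset.univ.image d with hD
  have hcard : D.card < N := lt_of_le_of_lt hd (Nat.sub_lt hN one_pos)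
  have hDne : D ≠ Finset.univ := by
    intro h
    rw [h, Finset.card_univ, Fintype.card_fin] at hcard
    exact lt_irrefl _ hcard
  obtain ⟨b, hb⟩ : ∃ b, b ∉ D := by
    by_contra h
    push_neg at h
    exact hDne (Finset.eq_univ_iff_forall.mpr h)
  let φ : ((↥D × Fin N) → F) →ₗ[F] Matrix (Fin N) (Fin N) F :=
    { toFun := fun f a j =>
        (if h : a ∈ D then f (⟨a, h⟩, j) else 0) -
        (if a = b then ∑ s : ↥D, f (s, j) else 0)
      map_add' := by
        intro f g; funext a j
        show _ = ((if h : a ∈ D then f (⟨a, h⟩, j) else 0) - (if a = b then ∑ s : ↥D, f (s, j) else 0)) + ((if h : a ∈ D then g (⟨a, h⟩, j) else 0) - (if a = b then ∑ s : ↥D, g (s, j) else 0))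
        by_cases h2 : a = b
        · subst h2; simp [hb, Finset.sum_add_distrib, Matrix.add_apply, Pi.add_apply]; ring
        · by_cases h : a ∈ D <;> simp [h, h2, Matrix.add_apply, Pi.add_apply]
      map_smul' := by
        intro c f; funext a j
        show _ = c * ((if h : a ∈ D then f (⟨a, h⟩, j) else 0) - (if a = b then ∑ s : ↥D, f (s, j) else 0))
        by_cases h2 : a = b
        · subst h2; simp [hb, Finset.mul_sum, mul_sub, Matrix.smul_apply, Pi.smul_apply, smul_eq_mul]
        · by_cases h : a ∈ D <;> simp [h, h2, Matrix.smul_apply, Pi.smul_apply, smul_eq_mul] }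
  have hφ : Function.Injective φ := by
    rw [injective_iff_map_eq_zero]
    intro f hf
    funext p
    obtain ⟨s, j⟩ := p
    have hsb : (s : Fin N) ≠ b := fun h => hb (h ▸ s.2)
    have : ((if h : (s : Fin N) ∈ D then f (⟨s, h⟩, j) else 0) - (if (s : Fin N) = b then ∑ t : ↥D, f (t, j) else 0)) = 0 := congrFun (congrFun hf (s : Fin N)) j
    simpa [φ, s.2, hsb] using this
  refine le_csSup ?_ ?_
  · refine ⟨Module.finrank F (Matrix (Fin N) (Fin N) F), ?_⟩
    rintro k ⟨U, -, rfl⟩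
    exact Submodule.finrank_le U
  · refine ⟨LinearMap.range φ, ?_, ?_⟩
    · rintro x hx hx0
      obtain ⟨f, rfl⟩ := hx
      have hf : f ≠ 0 := by rintro rfl; simp at hx0
      obtain ⟨⟨s, j⟩, hsj⟩ := Function.ne_iff.mp hf
      obtain ⟨i, -, hi⟩ := Finset.mem_image.mp s.2
      refine Set.mem_iUnion.mpr ⟨i, Set.mem_iUnion.mpr ⟨j, ?_, ?_⟩⟩
      · -- column sum is 0
        show (∑ a, φ f a i) = 0
        have h1 : (∑ a : Fin N, (if h : a ∈ D then f (⟨a, h⟩, i) else 0))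
            = ∑ s : ↥D, f (s, i) := by
          rw [← Finset.sum_subset (Finset.subset_univ D) (by intro a _ ha; simp [ha])]
          rw [← Finset.sum_attach D (fun a => if h : (a : Fin N) ∈ D then f (⟨a, h⟩, i) else 0)]
          refine Finset.sum_congr rfl ?_
          · intro s _; simp [s.2]
        have h2 : (∑ a : Fin N, (if a = b then (∑ s : ↥D, f (s, i)) else 0))
            = ∑ s : ↥D, f (s, i) := by
          simp [Finset.sum_ite_eq']
        show (∑ a : Fin N, ((if h : a ∈ D then f (⟨a, h⟩, i) else 0) - (if a = b then ∑ s : ↥D, f (s, i) else 0))) = 0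
        simp only [φ, LinearMap.coe_mk, AddHom.coe_mk, Finset.sum_sub_distrib, h1, h2, sub_self]
      · -- nonzero entry
        have hdi : d i ∈ D := Finset.mem_image_of_mem d (Finset.mem_univ i)
        have hdib : d i ≠ b := fun h => hb (h ▸ hdi)
        show φ f (d i) j ≠ 0
        have : φ f (d i) j = f (⟨d i, hdi⟩, j) := by
          show ((if h : d i ∈ D then f (⟨d i, h⟩, j) else 0) - (if d i = b then ∑ s : ↥D, f (s, j) else 0)) = _
          simp [φ, hdi, hdib]
        rw [this]
        have : (⟨d i, hdi⟩ : ↥D) = s := Subtype.ext hi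
        rw [this]; exact hsj
    · rw [LinearMap.finrank_range_of_inj hφ, Module.finrank_pi, Fintype.card_prod,
        Fintype.card_coe, Fintype.card_fin, mul_comm]
      rfl
end

section
/- For every integer N ≥ 1 and every demand d : [N] → [N], the min-rank satisfies κ(d) ≤ N·N_e(d) if N_e(d) ≤ N−1, and κ(d) ≤ N(N−1) if N_e(d) = N. Equivalently, there is a choice of scalars c : [N]×[N] → F_q for which the span of the matrices E_{d(i),j} + c(i,j)·v_i has dimension at most the stated bound. -/
open Matrix

lemma kappa_le_aux (F : Type*) [Field F] {N : ℕ} (d : Fin N → Fin N)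
    (c : Fin N × Fin N → F) {B : ℕ}
    (h : Module.finrank F (Submodule.span F
      (Set.range fun p : Fin N × Fin N =>
        Matrix.single (d p.1) p.2 (1 : F) + c p • vmat F p.1)) ≤ B) :
    kappaCFL F d ≤ B :=
  le_trans (Nat.sInf_le ⟨c, rfl⟩) h

lemma kappa_part1 (F : Type*) [Field F] {N : ℕ} (d : Fin N → Fin N) :
    Module.finrank F (Submodule.span F
      (Set.range fun p : Fin N × Fin N =>
        Matrix.single (d p.1) p.2 (1 : F) + (fun _ : Fin N × Fin N => (0:F)) p • vmat F p.1))
      ≤ N * numDistinct d := by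
  classical
  set s : Finset (Matrix (Fin N) (Fin N) F) :=
    ((Finset.univ.image d) ×ˢ Finset.univ).image
      (fun q : Fin N × Fin N => Matrix.single q.1 q.2 (1 : F)) with hs
  have hsub : (Set.range fun p : Fin N × Fin N =>
      Matrix.single (d p.1) p.2 (1 : F) + (fun _ : Fin N × Fin N => (0:F)) p • vmat F p.1)
      ⊆ (s : Set _) := by
    rintro x ⟨p, rfl⟩
    simp only [zero_smul, add_zero]
    simp only [hs, Finset.coe_image, Set.mem_image]
    exact ⟨(d p.1, p.2), by simp, by simp⟩
  refine le_trans (Submodule.finrank_mono (Submodule.span_mono hsub)) ?_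
  refine le_trans (finrank_span_finset_le_card s) ?_
  refine le_trans Finset.card_image_le ?_
  rw [Finset.card_product]
  simp [numDistinct, Nat.mul_comm]

lemma kappa_part2 (F : Type*) [Field F] {N : ℕ} (d : Fin N → Fin N)
    (hinj : Function.Injective d) :
    Module.finrank F (Submodule.span F
      (Set.range fun p : Fin N × Fin N =>
        Matrix.single (d p.1) p.2 (1 : F) +
          (fun p : Fin N × Fin N => if p.2 = p.1 then (-1:F) else 0) p • vmat F p.1))
      ≤ N * (N - 1) := by
  classical
  let φ : Matrix (Fin N) (Fin N) F →ₗ[F] (Fin N → F) :=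
    { toFun := fun Z j => Z (d j) j
      map_add' := fun Z W => rfl
      map_smul' := fun r Z => rfl }
  have hsurj : Function.Surjective φ := by
    intro w
    refine ⟨Matrix.of (fun a b => if a = d b then w b else 0), ?_⟩
    funext j
    simp [φ]
    exact if_pos rfl
  have hker : (Set.range fun p : Fin N × Fin N =>
      Matrix.single (d p.1) p.2 (1 : F) +
        (fun p : Fin N × Fin N => if p.2 = p.1 then (-1:F) else 0) p • vmat F p.1) ⊆
      (LinearMap.ker φ : Set _) := by
    rintro x ⟨⟨i, j⟩, rfl⟩
    simp only [SetLike.mem_coe, LinearMap.mem_ker]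
    funext j'
    show (Matrix.single (d i) j (1 : F) + (if j = i then (-1:F) else 0) • vmat F i) (d j') j' = (0 : Fin N → F) j'
    simp only [φ, LinearMap.coe_mk, AddHom.coe_mk, Matrix.add_apply, Matrix.smul_apply,
      Matrix.single, vmat, Matrix.of_apply, smul_eq_mul, Pi.zero_apply]
    by_cases h1 : j = j'
    · subst h1
      by_cases h2 : i = j
      · subst h2; simp [hinj.eq_iff]
      · have hd : ¬ d i = d j := fun h => h2 (hinj h)
        simp [hd, h2, Ne.symm h2]
    · by_cases h2 : j' = i
      · subst h2
        simp_all [Ne.symm h1]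
      · simp [h1, h2]
  have hle := Submodule.span_le.mpr hker
  refine le_trans (Submodule.finrank_mono hle) ?_
  have h1 := LinearMap.finrank_range_add_finrank_ker φ
  have h2 : Module.finrank F (Matrix (Fin N) (Fin N) F) = N * N := by
    simp [Module.finrank_matrix]
  have h3 : LinearMap.range φ = ⊤ := LinearMap.range_eq_top.mpr hsurj
  have h4 : Module.finrank F (LinearMap.range φ) = N := by
    rw [h3]; simp
  have : Module.finrank F (LinearMap.ker φ) = N * N - N := by omega
  rw [this, Nat.mul_sub, Nat.mul_one]

theorem kappa_le_CFL_NeqK (F : Type*) [Field F] [Fintype F]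
    (N : ℕ) (hN : 1 ≤ N) (d : Fin N → Fin N) :
    (numDistinct d ≤ N - 1 → kappaCFL F d ≤ N * numDistinct d) ∧
    (numDistinct d = N → kappaCFL F d ≤ N * (N - 1)) := by
  constructor
  · intro _
    exact kappa_le_aux F d _ (kappa_part1 F d)
  · intro hNe
    have hinj : Function.Injective d := by
      classical
      have hcard : (Finset.univ.image d).card = (Finset.univ : Finset (Fin N)).card := by
        simpa [numDistinct] using hNe
      have h := Finset.injOn_of_card_image_eq (s := (Finset.univ : Finset (Fin N)))
        (by rw [hcard, Finset.card_univ, Fintype.card_fin])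
      intro a b hab
      exact h (Finset.mem_coe.mpr (Finset.mem_univ a)) (Finset.mem_coe.mpr (Finset.mem_univ b)) hab
    exact kappa_le_aux F d _ (kappa_part2 F d hinj)
end

section
/- Let d : [N] → [N] be a demand with N_e(d) ≤ N−1, let D ⊆ [N] be the range of d, and fix u₀ ∈ [N]\D. Let S be the set of matrices M ∈ M_N such that every column of M sums to zero and every row of M with index in [N]\(D ∪ {u₀}) is zero. Then every nonzero element of S lies in ∪_{i,j} Z^{(i,j)}(d); in particular, for each nonzero M ∈ S there exist i,j ∈ [N] with M(d(i),j) ≠ 0. -/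
open Matrix

theorem span_subset_Zunion (F : Type*) [Field F] [Fintype F]
    (N : ℕ) (hN : 1 ≤ N) (d : Fin N → Fin N) (hd : numDistinct d ≤ N - 1)
    (u₀ : Fin N) (hu : u₀ ∉ Set.range d) :
    ∀ M : Matrix (Fin N) (Fin N) F,
      (∀ j, ∑ a, M a j = 0) →
      (∀ a, a ∉ Set.range d → a ≠ u₀ → ∀ b, M a b = 0) →
      M ≠ 0 →
      (M ∈ ⋃ i, ⋃ j, Zset F d i j) ∧ ∃ i j, M (d i) j ≠ 0 := by
  intro M hcol hrow hM
  have key : ∃ i j, M (d i) j ≠ 0 := by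
    -- first find a nonzero entry
    obtain ⟨a, b, hab⟩ : ∃ a b, M a b ≠ 0 := by
      by_contra h
      push_neg at h
      exact hM (by ext a b; simp [h])
    by_cases hA : a ∈ Set.range d
    · obtain ⟨i, rfl⟩ := hA
      exact ⟨i, b, hab⟩
    · have ha : a = u₀ := by
        by_contra h
        exact hab (hrow a hA h b)
      -- column b sums to 0 and M u₀ b ≠ 0, so some a' ≠ u₀ has M a' b ≠ 0
      obtain ⟨a', ha', hab'⟩ : ∃ a', a' ≠ u₀ ∧ M a' b ≠ 0 := by
        by_contra h
        push_neg at h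
        have hsum := hcol b
        have : ∑ x, M x b = M u₀ b := by
          apply Finset.sum_eq_single
          · intro x _ hx; exact h x hx
          · intro hx; exact absurd (Finset.mem_univ u₀) hx
        rw [this] at hsum
        exact hab (ha ▸ hsum)
      have hA' : a' ∈ Set.range d := by
        by_contra h
        exact hab' (hrow a' h ha' b)
      obtain ⟨i, rfl⟩ := hA'
      exact ⟨i, b, hab'⟩
  obtain ⟨i, j, hij⟩ := key
  refine ⟨?_, i, j, hij⟩
  exact Set.mem_iUnion.2 ⟨i, Set.mem_iUnion.2 ⟨j, hcol i, hij⟩⟩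
end

section
/- For every integer N ≥ 1, every demand d : [N] → [N], and every integer δ ≥ 0, the smallest length ℓ for which there exists a linear δ-error-correcting delivery code of length ℓ for I(M_CFL, d) equals N_q[κ*, 2δ+1], where κ* = N·N_e(d) if N_e(d) ≤ N−1 and κ* = N(N−1) if N_e(d) = N. -/
open Matrix

/-- `E` is a linear `δ`-error-correcting delivery code of length `ℓ` for the GIC
problem `I(M_CFL, d)` induced by CFL prefetching with `N` files and `K = N` users:
receiver `(i,j)` knows the coded packet `∑_a X(a,i)` and, from any received word
within Hamming distance `δ` of `E(X)`, must recover `X(d(i), j)`. -/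
def IsECDeliveryCode (F : Type*) [Field F] [DecidableEq F] {N : ℕ}
    (d : Fin N → Fin N) (δ ℓ : ℕ)
    (E : Matrix (Fin N) (Fin N) F →ₗ[F] (Fin ℓ → F)) : Prop :=
  ∀ i j : Fin N, ∃ Dec : (Fin ℓ → F) → F → F,
    ∀ X : Matrix (Fin N) (Fin N) F, ∀ y : Fin ℓ → F,
      hammingDist y (E X) ≤ δ → Dec y (∑ a, X a i) = X (d i) j

/-- The smallest length of a linear `δ`-error-correcting delivery code for
`I(M_CFL, d)`. -/
noncomputable def optLen (F : Type*) [Field F] [DecidableEq F] {N : ℕ}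
    (d : Fin N → Fin N) (δ : ℕ) : ℕ :=
  sInf { ℓ | ∃ E : Matrix (Fin N) (Fin N) F →ₗ[F] (Fin ℓ → F),
    IsECDeliveryCode F d δ ℓ E }

/-- `N_q[k, d']`: the smallest length `n` of a `k`-dimensional linear code over `F`
whose distinct codewords are at Hamming distance at least `d'` from each other. -/
noncomputable def shortestCodeLen (F : Type*) [Field F] [DecidableEq F] (k d' : ℕ) : ℕ :=
  sInf { n | ∃ C : Submodule F (Fin n → F), Module.finrank F C = k ∧
    ∀ x ∈ C, ∀ y ∈ C, x ≠ y → d' ≤ hammingDist x y }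

section Aux
variable {F : Type*} [Field F] [DecidableEq F]

/-- Repetition code: good codes of any dimension exist. -/
lemma exists_good_code (k dd : ℕ) (hdd : 1 ≤ dd) :
    ∃ C : Submodule F (Fin (k * dd) → F), Module.finrank F C = k ∧
      ∀ x ∈ C, ∀ y ∈ C, x ≠ y → dd ≤ hammingDist x y := by
  classical
  let R : (Fin k → F) →ₗ[F] (Fin (k * dd) → F) :=
    { toFun := fun v t => v (finProdFinEquiv.symm t).1
      map_add' := fun _ _ => rfl
      map_smul' := fun _ _ => rfl }
  have hR : ∀ (v : Fin k → F) (i : Fin k) (b : Fin dd),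
      R v (finProdFinEquiv (i, b)) = v i := by
    intro v i b
    show v (finProdFinEquiv.symm (finProdFinEquiv (i, b))).1 = v i
    rw [Equiv.symm_apply_apply]
  have hinj : Function.Injective R := by
    intro u v huv
    funext i
    have := congrFun huv (finProdFinEquiv (i, ⟨0, hdd⟩))
    rwa [hR, hR] at this
  refine ⟨LinearMap.range R, ?_, ?_⟩
  · rw [← (LinearEquiv.ofInjective R hinj).finrank_eq, Module.finrank_fin_fun]
  · rintro x ⟨u, rfl⟩ y ⟨v, rfl⟩ hne
    have huv : u ≠ v := fun h => hne (by rw [h])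
    obtain ⟨i, hi⟩ := Function.ne_iff.mp huv
    have hsub : (Finset.univ.image (fun b : Fin dd => finProdFinEquiv (i, b))) ⊆
        Finset.univ.filter (fun t => R u t ≠ R v t) := by
      intro t ht
      simp only [Finset.mem_image, Finset.mem_univ, true_and] at ht
      obtain ⟨b, rfl⟩ := ht
      simp only [Finset.mem_filter, Finset.mem_univ, true_and, hR]
      exact hi
    have hcard : (Finset.univ.image (fun b : Fin dd => finProdFinEquiv (i, b))).card = dd := by
      rw [Finset.card_image_of_injective _ (fun a b hab => by
        have := congrArg finProdFinEquiv.symm hab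
        simpa using this)]
      simp
    calc dd = _ := hcard.symm
      _ ≤ _ := Finset.card_le_card hsub
      _ = hammingDist (R u) (R v) := rfl

/-- Key converse lemma: directions visible to some receiver are spread out by `E`. -/
lemma key_dist {N : ℕ} {d : Fin N → Fin N} {δ ℓ : ℕ}
    {E : Matrix (Fin N) (Fin N) F →ₗ[F] (Fin ℓ → F)} (hE : IsECDeliveryCode F d δ ℓ E)
    {Z : Matrix (Fin N) (Fin N) F} {i j : Fin N}
    (h1 : ∑ a, Z a i = 0) (h2 : Z (d i) j ≠ 0) :
    2 * δ + 1 ≤ hammingNorm (E Z) := by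
  classical
  by_contra hcon
  push_neg at hcon
  obtain ⟨Dec, hDec⟩ := hE i j
  set s : Finset (Fin ℓ) := Finset.univ.filter (fun t => E Z t ≠ 0) with hs
  have hscard : s.card = hammingNorm (E Z) := rfl
  obtain ⟨t, hts, htcard⟩ := Finset.exists_subset_card_eq (min_le_right δ s.card)
  set y : Fin ℓ → F := fun p => if p ∈ t then E Z p else 0 with hy
  have hy0 : hammingDist y (E (0 : Matrix (Fin N) (Fin N) F)) ≤ δ := by
    rw [map_zero, hammingDist_zero_right]
    have hsub : Finset.univ.filter (fun p => y p ≠ 0) ⊆ t := by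
      intro p hp
      simp only [Finset.mem_filter, Finset.mem_univ, true_and, hy] at hp
      by_contra hpt
      exact hp (if_neg hpt)
    calc hammingNorm y = (Finset.univ.filter (fun p => y p ≠ 0)).card := rfl
      _ ≤ t.card := Finset.card_le_card hsub
      _ ≤ δ := by rw [htcard]; exact min_le_left _ _
  have hyZ : hammingDist y (E Z) ≤ δ := by
    have hsub : Finset.univ.filter (fun p => y p ≠ E Z p) ⊆ s \ t := by
      intro p hp
      simp only [Finset.mem_filter, Finset.mem_univ, true_and, hy] at hp
      rw [Finset.mem_sdiff]
      constructor
      · by_contra hps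
        simp only [hs, Finset.mem_filter, Finset.mem_univ, true_and, not_not] at hps
        apply hp
        split
        · rfl
        · exact hps.symm
      · intro hpt
        exact hp (if_pos hpt)
    calc hammingDist y (E Z) = (Finset.univ.filter (fun p => y p ≠ E Z p)).card := rfl
      _ ≤ (s \ t).card := Finset.card_le_card hsub
      _ ≤ δ := by
          rw [Finset.card_sdiff_of_subset hts, htcard, hscard]
          omega
  have e1 : Dec y (∑ a, Z a i) = Z (d i) j := hDec Z y hyZ
  have e0 : Dec y (∑ a, (0 : Matrix (Fin N) (Fin N) F) a i) = (0 : Matrix (Fin N) (Fin N) F) (d i) j :=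
    hDec 0 y hy0
  rw [h1] at e1
  simp only [Matrix.zero_apply, Finset.sum_const_zero] at e0
  exact h2 (by rw [← e1, e0])
end Aux

section Conv
variable {F : Type*} [Field F] [DecidableEq F]

lemma converse_mem {N : ℕ} (d : Fin N → Fin N) (δ ℓ : ℕ)
    (S : Finset (Fin N × Fin N)) (ρ : Fin N → Fin N)
    (hρ : ∀ j, (ρ j, j) ∉ S) (hD : ∀ p ∈ S, ∃ i, d i = p.1)
    (E : Matrix (Fin N) (Fin N) F →ₗ[F] (Fin ℓ → F)) (hE : IsECDeliveryCode F d δ ℓ E) :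
    ∃ C : Submodule F (Fin ℓ → F), Module.finrank F C = S.card ∧
      ∀ x ∈ C, ∀ y ∈ C, x ≠ y → 2 * δ + 1 ≤ hammingDist x y := by
  classical
  set g : (↥S → F) → Fin N → Fin N → F :=
    fun w a j => if h : (a, j) ∈ S then w ⟨(a, j), h⟩ else 0 with hg
  have gadd : ∀ w w' a j, g (w + w') a j = g w a j + g w' a j := by
    intro w w' a j
    simp only [hg]
    split <;> simp
  have gsmul : ∀ (c : F) w a j, g (c • w) a j = c * g w a j := by
    intro c w a j
    simp only [hg]
    split <;> simp
  let Φ : (↥S → F) →ₗ[F] Matrix (Fin N) (Fin N) F :=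
    { toFun := fun w => Matrix.of fun a j =>
        g w a j + (if a = ρ j then -∑ b, g w b j else 0)
      map_add' := by
        intro w w'
        ext a j
        simp only [Matrix.of_apply, Matrix.add_apply, gadd]
        split
        · rw [Finset.sum_add_distrib]; ring
        · ring
      map_smul' := by
        intro c w
        ext a j
        simp only [Matrix.of_apply, Matrix.smul_apply, RingHom.id_apply, gsmul, smul_eq_mul]
        split
        · rw [← Finset.mul_sum]
          ring
        · ring }
  have hΦS : ∀ (w : ↥S → F) (a j : Fin N) (h : (a, j) ∈ S), Φ w a j = w ⟨(a, j), h⟩ := by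
    intro w a j h
    have hne : a ≠ ρ j := by
      intro haj
      exact hρ j (haj ▸ h)
    show g w a j + _ = _
    rw [if_neg hne, hg]
    simp [h]
  have hΦcol : ∀ (w : ↥S → F) (i : Fin N), ∑ a, Φ w a i = 0 := by
    intro w i
    show ∑ a, (g w a i + _) = 0
    rw [Finset.sum_add_distrib, Finset.sum_ite_eq' Finset.univ (ρ i)
      (fun _ => -∑ b, g w b i)]
    simp
  have hΦgood : ∀ w : ↥S → F, w ≠ 0 → ∃ i j, (∑ a, Φ w a i = 0) ∧ Φ w (d i) j ≠ 0 := by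
    intro w hw
    obtain ⟨p, hp⟩ := Function.ne_iff.mp hw
    obtain ⟨⟨a, j⟩, hmem⟩ := p
    obtain ⟨i, hi⟩ := hD (a, j) hmem
    refine ⟨i, j, hΦcol w i, ?_⟩
    rw [hi, hΦS w a j hmem]
    exact hp
  have hEΦinj : Function.Injective (E ∘ₗ Φ) := by
    rw [← LinearMap.ker_eq_bot, LinearMap.ker_eq_bot']
    intro w hw
    by_contra hw0
    obtain ⟨i, j, hc, hnz⟩ := hΦgood w hw0
    have := key_dist hE hc hnz
    rw [show E (Φ w) = (E ∘ₗ Φ) w from rfl, hw] at this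
    simp [hammingNorm] at this
  refine ⟨LinearMap.range (E ∘ₗ Φ), ?_, ?_⟩
  · rw [← (LinearEquiv.ofInjective _ hEΦinj).finrank_eq, Module.finrank_pi, Fintype.card_coe]
  · rintro x ⟨u, rfl⟩ y ⟨v, rfl⟩ hne
    have huv : u - v ≠ 0 := sub_ne_zero.mpr (fun h => hne (by rw [h]))
    obtain ⟨i, j, hc, hnz⟩ := hΦgood (u - v) huv
    have hk := key_dist hE hc hnz
    rw [hammingDist_eq_hammingNorm]
    have : (E ∘ₗ Φ) u - (E ∘ₗ Φ) v = E (Φ (u - v)) := by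
      rw [map_sub, map_sub]
      rfl
    rw [← hammingDist_eq_hammingNorm, hammingDist_comm, hammingDist_eq_hammingNorm, neg_add_eq_sub, this]
    exact hk
end Conv

section Constr
variable {F : Type*} [Field F] [DecidableEq F]

lemma construction {N : ℕ} (d : Fin N → Fin N) (δ n : ℕ)
    (S : Finset (Fin N × Fin N))
    (hdec : ∀ i j : Fin N, (d i, j) ∈ S ∨ (j = i ∧ ∀ a, a ≠ d i → (a, i) ∈ S))
    (C : Submodule F (Fin n → F)) (hCr : Module.finrank F C = S.card)
    (hCd : ∀ x ∈ C, ∀ y ∈ C, x ≠ y → 2 * δ + 1 ≤ hammingDist x y) :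
    ∃ E : Matrix (Fin N) (Fin N) F →ₗ[F] (Fin n → F), IsECDeliveryCode F d δ n E := by
  classical
  let L : Matrix (Fin N) (Fin N) F →ₗ[F] (↥S → F) :=
    { toFun := fun X p => X p.1.1 p.1.2
      map_add' := fun _ _ => rfl
      map_smul' := fun _ _ => rfl }
  have hfr : Module.finrank F (↥S → F) = Module.finrank F C := by
    rw [Module.finrank_pi, Fintype.card_coe, hCr]
  let G : (↥S → F) ≃ₗ[F] C := LinearEquiv.ofFinrankEq _ _ hfr
  refine ⟨C.subtype ∘ₗ (G : (↥S → F) →ₗ[F] C) ∘ₗ L, ?_⟩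
  intro i j
  set E := C.subtype ∘ₗ (G : (↥S → F) →ₗ[F] C) ∘ₗ L with hEdef
  refine ⟨fun y s =>
    if h : ∃ c : C, hammingDist y (c : Fin n → F) ≤ δ then
      (if hm : (d i, j) ∈ S then (G.symm h.choose) ⟨(d i, j), hm⟩
       else s - ∑ a, (if h' : (a, i) ∈ S then (G.symm h.choose) ⟨(a, i), h'⟩ else 0))
    else 0, ?_⟩
  intro X y hy
  have hEX : E X = ((G (L X) : C) : Fin n → F) := rfl
  have hex : ∃ c : C, hammingDist y (c : Fin n → F) ≤ δ := ⟨G (L X), by rw [← hEX]; exact hy⟩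
  beta_reduce
  rw [dif_pos hex]
  have hchoose : hex.choose = G (L X) := by
    by_contra hne
    have h1 := hex.choose_spec
    have hne' : (hex.choose : Fin n → F) ≠ E X := by
      rw [hEX]
      exact fun h => hne (Subtype.ext h)
    have h2 := hCd _ hex.choose.2 _ (hEX ▸ (G (L X)).2) hne'
    have h3 := hammingDist_triangle (hex.choose : Fin n → F) y (E X)
    rw [hammingDist_comm (hex.choose : Fin n → F) y] at h3
    omega
  rw [hchoose, LinearEquiv.symm_apply_apply]
  by_cases hm : (d i, j) ∈ S
  · rw [dif_pos hm]
    rfl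
  · rw [dif_neg hm]
    obtain hm' | ⟨hji, hall⟩ := hdec i j
    · exact absurd hm' hm
    · rw [hji] at hm ⊢
      have hsum : ∀ a : Fin N, (if h' : (a, i) ∈ S then (L X) ⟨(a, i), h'⟩ else 0)
          = if a = d i then 0 else X a i := by
        intro a
        by_cases ha : a = d i
        · subst ha
          rw [dif_neg hm, if_pos rfl]
        · rw [dif_pos (hall a ha), if_neg ha]
          rfl
      simp only [hsum]
      rw [← Finset.sum_sub_distrib]
      have : ∀ a : Fin N, X a i - (if a = d i then 0 else X a i)
          = if a = d i then X a i else 0 := by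
        intro a
        by_cases ha : a = d i <;> simp [ha]
      simp only [this]
      rw [Finset.sum_ite_eq' Finset.univ (d i) (fun a => X a i)]
      simp
end Constr

section Glue
variable {F : Type*} [Field F] [DecidableEq F]

lemma unified {N : ℕ} (d : Fin N → Fin N) (δ : ℕ)
    (S : Finset (Fin N × Fin N)) (ρ : Fin N → Fin N)
    (hρ : ∀ j, (ρ j, j) ∉ S) (hD : ∀ p ∈ S, ∃ i, d i = p.1)
    (hdec : ∀ i j : Fin N, (d i, j) ∈ S ∨ (j = i ∧ ∀ a, a ≠ d i → (a, i) ∈ S)) :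
    optLen F d δ = shortestCodeLen F S.card (2 * δ + 1) := by
  classical
  set Q : Set ℕ := { n | ∃ C : Submodule F (Fin n → F), Module.finrank F C = S.card ∧
    ∀ x ∈ C, ∀ y ∈ C, x ≠ y → 2 * δ + 1 ≤ hammingDist x y } with hQ
  have hQne : Q.Nonempty := by
    obtain ⟨C, h1, h2⟩ := exists_good_code (F := F) S.card (2 * δ + 1) (by omega)
    exact ⟨S.card * (2 * δ + 1), C, h1, h2⟩
  have hmem : shortestCodeLen F S.card (2 * δ + 1) ∈ Q := Nat.sInf_mem hQne
  obtain ⟨C, hCr, hCd⟩ := hmem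
  obtain ⟨E, hE⟩ := construction d δ _ S hdec C hCr hCd
  apply le_antisymm
  · exact Nat.sInf_le ⟨E, hE⟩
  · have h := le_csInf (α := ℕ)
      (s := { ℓ | ∃ E : Matrix (Fin N) (Fin N) F →ₗ[F] (Fin ℓ → F), IsECDeliveryCode F d δ ℓ E })
      (a := shortestCodeLen F S.card (2 * δ + 1)) ⟨_, E, hE⟩
      (by rintro ℓ ⟨E', hE'⟩; exact Nat.sInf_le (converse_mem d δ ℓ S ρ hρ hD E' hE'))
    exact h
end Glue

theorem optLen_eq_CFL_NeqK (F : Type*) [Field F] [Fintype F] [DecidableEq F]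
    (N : ℕ) (hN : 1 ≤ N) (d : Fin N → Fin N) (δ : ℕ) :
    (numDistinct d ≤ N - 1 →
      optLen F d δ = shortestCodeLen F (N * numDistinct d) (2 * δ + 1)) ∧
    (numDistinct d = N →
      optLen F d δ = shortestCodeLen F (N * (N - 1)) (2 * δ + 1)) := by
  classical
  constructor
  · intro h1
    set De : Finset (Fin N) := Finset.univ.image d with hDe
    have hr : ∃ r : Fin N, r ∉ De := by
      by_contra hc
      push_neg at hc
      have : (Finset.univ : Finset (Fin N)) ⊆ De := fun x _ => hc x
      have := Finset.card_le_card this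
      simp only [Finset.card_univ, Fintype.card_fin] at this
      have hcard : De.card ≤ N - 1 := h1
      omega
    obtain ⟨r, hrmem⟩ := hr
    set S : Finset (Fin N × Fin N) := De ×ˢ Finset.univ with hS
    have hcard : S.card = N * numDistinct d := by
      rw [hS, Finset.card_product, Finset.card_univ, Fintype.card_fin, mul_comm]
      rfl
    rw [← hcard]
    apply unified d δ S (fun _ => r)
    · intro j hj
      rw [hS, Finset.mem_product] at hj
      exact hrmem hj.1
    · intro p hp
      rw [hS, Finset.mem_product] at hp
      obtain ⟨i, hi⟩ := Finset.mem_image.mp hp.1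
      exact ⟨i, hi.2⟩
    · intro i j
      left
      rw [hS, Finset.mem_product]
      exact ⟨Finset.mem_image_of_mem d (Finset.mem_univ i), Finset.mem_univ j⟩
  · intro h2
    have hinj : Function.Injective d := by
      have hio := Finset.injOn_of_card_image_eq (f := d) (s := Finset.univ)
        (by rw [Finset.card_univ, Fintype.card_fin]; exact h2)
      intro a b hab
      exact hio (Finset.mem_coe.mpr (Finset.mem_univ a)) (Finset.mem_coe.mpr (Finset.mem_univ b)) hab
    have hsurj : Function.Surjective d := Finite.surjective_of_injective hinj
    set S : Finset (Fin N × Fin N) :=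
      Finset.univ.filter (fun p : Fin N × Fin N => p.1 ≠ d p.2) with hS
    have hcard : S.card = N * (N - 1) := by
      have hT : (Finset.univ.filter (fun p : Fin N × Fin N => p.1 = d p.2))
          = Finset.univ.image (fun j => (d j, j)) := by
        ext p
        simp only [Finset.mem_filter, Finset.mem_univ, true_and, Finset.mem_image]
        constructor
        · intro hp
          exact ⟨p.2, by rw [← hp]⟩
        · rintro ⟨j, rfl⟩
          rfl
      have hTcard : (Finset.univ.filter (fun p : Fin N × Fin N => p.1 = d p.2)).card = N := by
        rw [hT, Finset.card_image_of_injective _ (fun a b hab => (Prod.ext_iff.mp hab).2),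
          Finset.card_univ, Fintype.card_fin]
      have hsum := Finset.card_filter_add_card_filter_not
        (s := (Finset.univ : Finset (Fin N × Fin N)))
        (p := fun p : Fin N × Fin N => p.1 = d p.2)
      rw [Finset.card_univ, Fintype.card_prod, Fintype.card_fin] at hsum
      obtain ⟨m, rfl⟩ : ∃ m, N = m + 1 := ⟨N - 1, by omega⟩
      have hcc : S.card = (Finset.filter (fun a : Fin (m+1) × Fin (m+1) => ¬a.1 = d a.2)
          Finset.univ).card := by
        congr 1
      rw [Nat.add_sub_cancel]
      rw [Nat.mul_succ] at hsum
      omega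
    rw [← hcard]
    apply unified d δ S d
    · intro j
      rw [hS]
      simp
    · intro p hp
      exact hsurj p.1
    · intro i j
      by_cases hij : d i = d j
      · right
        refine ⟨(hinj hij).symm, fun a ha => ?_⟩
        rw [hS]
        simp only [Finset.mem_filter, Finset.mem_univ, true_and]
        exact ha
      · left
        rw [hS]
        simp only [Finset.mem_filter, Finset.mem_univ, true_and]
        exact hij
end

section
/- For every integer N ≥ 1 and every integer δ ≥ 0, the maximum over all demands d : [N] → [N] of the smallest length of a linear δ-error-correcting delivery code for I(M_CFL, d) equals N_q[N(N−1), 2δ+1], and this maximum is attained when d is a bijection. -/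
open Matrix

section Aux
variable {F : Type*} [Field F] [DecidableEq F] {N : ℕ}

/-- Weight condition equivalent to being a δ-EC delivery code. -/
def CFL_WtCond (d : Fin N → Fin N) (δ ℓ : ℕ)
    (E : Matrix (Fin N) (Fin N) F →ₗ[F] (Fin ℓ → F)) : Prop :=
  ∀ (i j : Fin N) (Z : Matrix (Fin N) (Fin N) F),
    (∑ a, Z a i) = 0 → Z (d i) j ≠ 0 → 2 * δ + 1 ≤ hammingNorm (E Z)

lemma CFL_exists_middle {ℓ δ : ℕ} (v : Fin ℓ → F) (h : hammingNorm v ≤ 2 * δ) :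
    ∃ y : Fin ℓ → F, hammingDist y 0 ≤ δ ∧ hammingDist y v ≤ δ := by
  classical
  set S : Finset (Fin ℓ) := Finset.univ.filter (fun k => v k ≠ 0) with hS
  have hScard : hammingNorm v = S.card := rfl
  obtain ⟨T, hTS, hT⟩ := Finset.exists_subset_card_eq (min_le_right δ S.card)
  refine ⟨fun k => if k ∈ T then v k else 0, ?_, ?_⟩
  · have hsub : (Finset.univ.filter fun k => (if k ∈ T then v k else 0) ≠ (0:F)) ⊆ T := by
      intro k hk
      simp only [Finset.mem_filter] at hk
      by_contra hkT
      simp [hkT] at hk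
    calc (Finset.univ.filter fun k => (if k ∈ T then v k else 0) ≠ (0:F)).card
        ≤ T.card := Finset.card_le_card hsub
      _ ≤ δ := by omega
  · have hsub : (Finset.univ.filter fun k => (if k ∈ T then v k else 0) ≠ v k) ⊆ S \ T := by
      intro k hk
      simp only [Finset.mem_filter, Finset.mem_univ, true_and] at hk
      by_cases hkT : k ∈ T
      · simp [hkT] at hk
      · simp only [hkT, if_false] at hk
        simp [Finset.mem_sdiff, hS, hkT, Ne, eq_comm, hk]
        exact fun hh => hk hh.symm
    calc (Finset.univ.filter fun k => (if k ∈ T then v k else 0) ≠ v k).card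
        ≤ (S \ T).card := Finset.card_le_card hsub
      _ = S.card - T.card := Finset.card_sdiff_of_subset hTS
      _ ≤ δ := by omega

lemma CFL_wtCond_of_isEC {d : Fin N → Fin N} {δ ℓ : ℕ}
    {E : Matrix (Fin N) (Fin N) F →ₗ[F] (Fin ℓ → F)}
    (hE : IsECDeliveryCode F d δ ℓ E) : CFL_WtCond d δ ℓ E := by
  intro i j Z h0 hz
  by_contra hlt
  push_neg at hlt
  obtain ⟨y, hy0, hyZ⟩ := CFL_exists_middle (δ := δ) (E Z) (by omega)
  obtain ⟨Dec, hDec⟩ := hE i j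
  have h1 := hDec Z y hyZ
  have h2 := hDec 0 y (by simpa using hy0)
  rw [h0] at h1
  simp only [Matrix.zero_apply, Finset.sum_const_zero] at h2
  exact hz (by rw [← h1, h2])

set_option maxHeartbeats 1000000 in
lemma CFL_isEC_of_wtCond {d : Fin N → Fin N} {δ ℓ : ℕ}
    {E : Matrix (Fin N) (Fin N) F →ₗ[F] (Fin ℓ → F)}
    (hE : CFL_WtCond d δ ℓ E) : IsECDeliveryCode F d δ ℓ E := by
  classical
  intro i j
  refine ⟨fun y s =>
    if h : ∃ X', hammingDist y (E X') ≤ δ ∧ (∑ a, X' a i) = s then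
      h.choose (d i) j else 0, ?_⟩
  intro X y hy
  have hex : ∃ X', hammingDist y (E X') ≤ δ ∧ (∑ a, X' a i) = (∑ a, X a i) :=
    ⟨X, hy, rfl⟩
  beta_reduce
  rw [dif_pos hex]
  obtain ⟨hd1, hd2⟩ := hex.choose_spec
  set X' := hex.choose
  by_contra hne
  have hZ : X' (d i) j - X (d i) j ≠ 0 := sub_ne_zero.mpr hne
  have hsum : (∑ a, (X' - X) a i) = 0 := by
    simp only [Matrix.sub_apply, Finset.sum_sub_distrib, hd2, sub_self]
  have := hE i j (X' - X) hsum (by simpa using hZ)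
  have hdist : hammingNorm (E (X' - X)) ≤ 2 * δ := by
    rw [map_sub, ← neg_add_eq_sub, ← hammingDist_eq_hammingNorm, hammingDist_comm]
    calc hammingDist (E X') (E X)
        ≤ hammingDist (E X') y + hammingDist y (E X) := hammingDist_triangle _ y _
      _ ≤ δ + δ := by
          have := hammingDist_comm y (E X')
          omega
      _ = 2 * δ := by omega
  omega

end Aux

section Aux2
variable {F : Type*} [Field F] [DecidableEq F] {N : ℕ}

/-- The column-sum (cache content) linear map. -/
def CFL_colSum (F : Type*) [Field F] (N : ℕ) :
    Matrix (Fin N) (Fin N) F →ₗ[F] (Fin N → F) where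
  toFun X := fun i => ∑ a, X a i
  map_add' X Y := by funext i; simp [Finset.sum_add_distrib]
  map_smul' c X := by funext i; simp [Finset.mul_sum]

lemma CFL_sigma_exists (d : Fin N → Fin N) :
    ∃ σ : Fin N → Fin N, ∀ i j, σ j = d i → j = i := by
  by_cases h : Function.Injective d
  · exact ⟨d, fun i j hji => h hji⟩
  · have hs : ∃ a₀, ∀ i, d i ≠ a₀ := by
      by_contra hcon
      push_neg at hcon
      exact h (Finite.injective_iff_surjective.mpr fun b => hcon b)
    obtain ⟨a₀, ha₀⟩ := hs
    exact ⟨fun _ => a₀, fun i j hji => absurd hji.symm (ha₀ i)⟩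

/-- Upper bound construction: from a good linear code, build a delivery code. -/
lemma CFL_construction (d : Fin N → Fin N) (δ : ℕ) {n : ℕ}
    (C : Submodule F (Fin n → F)) (hC1 : Module.finrank F C = N * (N - 1))
    (hC2 : ∀ x ∈ C, ∀ y ∈ C, x ≠ y → 2 * δ + 1 ≤ hammingDist x y) :
    ∃ E : Matrix (Fin N) (Fin N) F →ₗ[F] (Fin n → F), CFL_WtCond d δ n E := by
  classical
  obtain ⟨σ, hσ⟩ := CFL_sigma_exists d
  set J : (Fin N → F) →ₗ[F] Matrix (Fin N) (Fin N) F :=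
    { toFun := fun c => Matrix.of fun a b => if a = σ b then c b else 0
      map_add' := by
        intro c c'; ext a b; simp only [Matrix.of_apply, Matrix.add_apply, Pi.add_apply]
        split <;> simp
      map_smul' := by
        intro r c; ext a b
        simp only [Matrix.of_apply, Matrix.smul_apply, Pi.smul_apply, RingHom.id_apply,
          smul_eq_mul]
        split <;> simp } with hJ
  have hJinj : Function.Injective J := by
    intro c c' hcc
    funext b
    have := congrFun (congrFun (congrArg (fun M => (M : Matrix (Fin N) (Fin N) F)) hcc) (σ b)) b
    simpa [hJ] using this
  set W := LinearMap.range J with hW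
  have hWrank : Module.finrank F W = N := by
    rw [hW, LinearMap.finrank_range_of_inj hJinj]
    simp [Module.finrank_pi]
  have hQrank : Module.finrank F (Matrix (Fin N) (Fin N) F ⧸ W) = N * (N - 1) := by
    have h1 := Submodule.finrank_quotient_add_finrank W
    have h2 : Module.finrank F (Matrix (Fin N) (Fin N) F) = N * N := by
      rw [Module.finrank_matrix]; simp
    rw [h2, hWrank] at h1
    have h3 : N * (N - 1) = N * N - N := Nat.mul_sub_one N N
    have h4 : N ≤ N * N := by
      rcases Nat.eq_zero_or_pos N with h0 | h0
      · simp [h0]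
      · exact Nat.le_mul_of_pos_left N h0
    omega
  have : FiniteDimensional F C := inferInstance
  let e : (Matrix (Fin N) (Fin N) F ⧸ W) ≃ₗ[F] C :=
    LinearEquiv.ofFinrankEq _ _ (by rw [hQrank, hC1])
  refine ⟨C.subtype ∘ₗ e.toLinearMap ∘ₗ W.mkQ, ?_⟩
  intro i j Z h0 hz
  have hZW : Z ∉ W := by
    rintro ⟨c, rfl⟩
    have hci : c i = 0 := by
      have : (∑ a, (J c) a i) = c i := by
        simp [hJ, Finset.sum_ite_eq' Finset.univ (σ i) (fun _ => c i)]
      rw [this] at h0; exact h0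
    have : σ j = d i ∧ c j ≠ 0 := by
      by_contra hcon
      apply hz
      simp only [hJ, LinearMap.coe_mk, AddHom.coe_mk, Matrix.of_apply]
      by_cases hσj : d i = σ j
      · simp only [hσj, if_true]
        by_contra hcj
        exact hcon ⟨hσj.symm, hcj⟩
      · simp [hσj]
    obtain ⟨hσj, hcj⟩ := this
    rw [hσ i j hσj] at hcj
    exact hcj hci
  have hmkQ : W.mkQ Z ≠ 0 := by
    rw [Ne, Submodule.mkQ_apply, Submodule.Quotient.mk_eq_zero]; exact hZW
  have hcne : (e (W.mkQ Z) : Fin n → F) ≠ 0 := by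
    intro hc
    apply hmkQ
    have : e (W.mkQ Z) = 0 := by exact_mod_cast Subtype.ext hc
    simpa using e.map_eq_zero_iff.mp this
  have := hC2 _ (e (W.mkQ Z)).2 0 C.zero_mem hcne
  rw [hammingDist_zero_right] at this
  exact this

/-- Existence of a `k`-dimensional code of length `k*w` with distance `w`. -/
lemma CFL_repcode (F : Type*) [Field F] [DecidableEq F] (k w : ℕ) (hw : 0 < w) :
    ∃ C : Submodule F (Fin (k * w) → F), Module.finrank F C = k ∧
      ∀ x ∈ C, ∀ y ∈ C, x ≠ y → w ≤ hammingDist x y := by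
  classical
  set g : Fin (k * w) → Fin k := fun p => (finProdFinEquiv.symm p).1 with hg
  set G : (Fin k → F) →ₗ[F] (Fin (k * w) → F) := LinearMap.funLeft F F g with hG
  have hgsurj : Function.Surjective g := by
    intro a
    refine ⟨finProdFinEquiv (a, ⟨0, hw⟩), ?_⟩
    show (finProdFinEquiv.symm (finProdFinEquiv (a, ⟨0, hw⟩))).1 = a
    rw [Equiv.symm_apply_apply]
  have hGinj : Function.Injective G := LinearMap.funLeft_injective_of_surjective F F g hgsurj
  refine ⟨LinearMap.range G, ?_, ?_⟩
  · rw [LinearMap.finrank_range_of_inj hGinj]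
    simp [Module.finrank_pi]
  · rintro x ⟨m, rfl⟩ y ⟨m', rfl⟩ hne
    rw [hammingDist_comm, hammingDist_eq_hammingNorm, neg_add_eq_sub, ← map_sub]
    have hm : m - m' ≠ 0 := by
      intro h; apply hne; rw [sub_eq_zero] at h; rw [h]
    obtain ⟨a, ha⟩ : ∃ a, (m - m') a ≠ 0 := by
      by_contra hcon; push_neg at hcon; exact hm (funext hcon)
    set z := G (m - m') with hz
    have hsup : (Finset.univ.image fun t : Fin w => finProdFinEquiv (a, t)) ⊆
        Finset.univ.filter (fun p => z p ≠ 0) := by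
      intro p hp
      simp only [Finset.mem_image, Finset.mem_univ, true_and] at hp
      obtain ⟨t, rfl⟩ := hp
      simp only [Finset.mem_filter, Finset.mem_univ, true_and]
      show G (m - m') _ ≠ 0
      simp only [hG, LinearMap.funLeft_apply, hg, Equiv.symm_apply_apply]
      exact ha
    have hcard : (Finset.univ.image fun t : Fin w => finProdFinEquiv (a, t)).card = w := by
      rw [Finset.card_image_of_injective _ (fun t t' htt => by
        have := finProdFinEquiv.injective htt
        exact (Prod.mk.injEq _ _ _ _).mp this |>.2)]
      simp
    calc w = _ := hcard.symm
      _ ≤ (Finset.univ.filter (fun p => z p ≠ 0)).card := Finset.card_le_card hsup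
      _ = hammingNorm z := rfl

end Aux2

section Aux3
variable {F : Type*} [Field F] [DecidableEq F] {N : ℕ}

/-- Lower bound: a valid delivery code for a bijective demand yields a good linear code. -/
lemma CFL_lowerBound {d : Fin N → Fin N} (hd : Function.Bijective d) (hN : 1 ≤ N)
    {δ ℓ : ℕ} {E : Matrix (Fin N) (Fin N) F →ₗ[F] (Fin ℓ → F)}
    (hE : IsECDeliveryCode F d δ ℓ E) :
    ∃ C : Submodule F (Fin ℓ → F), Module.finrank F C = N * (N - 1) ∧
      ∀ x ∈ C, ∀ y ∈ C, x ≠ y → 2 * δ + 1 ≤ hammingDist x y := by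
  classical
  have hW := CFL_wtCond_of_isEC hE
  set Φ := CFL_colSum F N with hΦ
  set K := LinearMap.ker Φ with hK
  have key : ∀ Z ∈ K, Z ≠ 0 → 2 * δ + 1 ≤ hammingNorm (E Z) := by
    intro Z hZK hZ0
    obtain ⟨a, ha⟩ : ∃ a, Z a ≠ 0 := by
      by_contra hcon; push_neg at hcon
      exact hZ0 (by ext a b; simp [hcon a])
    obtain ⟨j, hj⟩ : ∃ j, Z a j ≠ 0 := by
      by_contra hcon; push_neg at hcon
      exact ha (funext hcon)
    obtain ⟨i, rfl⟩ := hd.2 a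
    refine hW i j Z ?_ hj
    have : Φ Z = 0 := hZK
    exact congrFun this i
  have hEinj : Function.Injective (E.domRestrict K) := by
    intro z1 z2 h12
    have hsub : ((z1 : Matrix (Fin N) (Fin N) F) - z2) ∈ K := sub_mem z1.2 z2.2
    have hEz : E ((z1 : Matrix (Fin N) (Fin N) F) - z2) = 0 := by
      rw [map_sub]
      simpa [LinearMap.domRestrict_apply, sub_eq_zero] using h12
    by_contra hne
    have hzz : ((z1 : Matrix (Fin N) (Fin N) F) - z2) ≠ 0 := by
      intro h; apply hne; exact Subtype.ext (sub_eq_zero.mp h)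
    have := key _ hsub hzz
    rw [hEz] at this
    simp [hammingNorm_zero] at this
  have hΦsurj : Function.Surjective Φ := by
    intro c
    refine ⟨Matrix.of fun a b => if a = (⟨0, hN⟩ : Fin N) then c b else 0, ?_⟩
    funext b
    show (∑ a, if a = (⟨0, hN⟩ : Fin N) then c b else 0) = c b
    simp [Finset.sum_ite_eq' Finset.univ (⟨0, hN⟩ : Fin N) (fun _ => c b)]
  have hKrank : Module.finrank F K = N * (N - 1) := by
    have h1 := LinearMap.finrank_range_add_finrank_ker Φ
    rw [LinearMap.range_eq_top.mpr hΦsurj, finrank_top] at h1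
    have h2 : Module.finrank F (Matrix (Fin N) (Fin N) F) = N * N := by
      rw [Module.finrank_matrix]; simp
    have h2' : Module.finrank F (Fin N → F) = N := by simp [Module.finrank_pi]
    rw [h2, h2'] at h1
    have h3 : N * (N - 1) = N * N - N := Nat.mul_sub_one N N
    have h4 : N ≤ N * N := Nat.le_mul_of_pos_left N (by omega)
    rw [hK]
    omega
  refine ⟨K.map E, ?_, ?_⟩
  · have hr : K.map E = LinearMap.range (E.domRestrict K) :=
      (LinearMap.range_domRestrict K E).symm
    rw [hr, LinearMap.finrank_range_of_inj hEinj, hKrank]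
  · rintro x hx y hy hne
    obtain ⟨Z1, hZ1, rfl⟩ := Submodule.mem_map.mp hx
    obtain ⟨Z2, hZ2, rfl⟩ := Submodule.mem_map.mp hy
    rw [hammingDist_comm, hammingDist_eq_hammingNorm, neg_add_eq_sub, ← map_sub]
    refine key _ (sub_mem hZ1 hZ2) ?_
    intro h
    exact hne (by rw [← sub_eq_zero, ← map_sub, h, map_zero])

end Aux3

theorem optLen_worst_CFL_NeqK (F : Type*) [Field F] [Fintype F] [DecidableEq F]
    (N : ℕ) (hN : 1 ≤ N) (δ : ℕ) :
    (⨆ d : Fin N → Fin N, optLen F d δ) =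
      shortestCodeLen F (N * (N - 1)) (2 * δ + 1) ∧
    ∀ d : Fin N → Fin N, Function.Bijective d →
      optLen F d δ = shortestCodeLen F (N * (N - 1)) (2 * δ + 1) := by
  classical
  have hNe : Nonempty (Fin N → Fin N) := ⟨id⟩
  have hsetne : {n | ∃ C : Submodule F (Fin n → F),
      Module.finrank F C = N * (N - 1) ∧
      ∀ x ∈ C, ∀ y ∈ C, x ≠ y → 2 * δ + 1 ≤ hammingDist x y}.Nonempty := by
    obtain ⟨C, hC1, hC2⟩ := CFL_repcode F (N * (N - 1)) (2 * δ + 1) (by omega)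
    exact ⟨(N * (N - 1)) * (2 * δ + 1), C, hC1, hC2⟩
  have hmem : ∃ C : Submodule F (Fin (shortestCodeLen F (N * (N - 1)) (2 * δ + 1)) → F),
      Module.finrank F C = N * (N - 1) ∧
      ∀ x ∈ C, ∀ y ∈ C, x ≠ y → 2 * δ + 1 ≤ hammingDist x y := Nat.sInf_mem hsetne
  obtain ⟨C, hC1, hC2⟩ := hmem
  have hub : ∀ d : Fin N → Fin N,
      optLen F d δ ≤ shortestCodeLen F (N * (N - 1)) (2 * δ + 1) := by
    intro d
    obtain ⟨E, hE⟩ := CFL_construction d δ C hC1 hC2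
    exact Nat.sInf_le ⟨E, CFL_isEC_of_wtCond hE⟩
  have hlb : ∀ d : Fin N → Fin N, Function.Bijective d →
      shortestCodeLen F (N * (N - 1)) (2 * δ + 1) ≤ optLen F d δ := by
    intro d hd
    have hone : {ℓ | ∃ E : Matrix (Fin N) (Fin N) F →ₗ[F] (Fin ℓ → F),
        IsECDeliveryCode F d δ ℓ E}.Nonempty := by
      obtain ⟨E, hE⟩ := CFL_construction d δ C hC1 hC2
      exact ⟨_, E, CFL_isEC_of_wtCond hE⟩
    have hmem2 : ∃ E : Matrix (Fin N) (Fin N) F →ₗ[F] (Fin (optLen F d δ) → F),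
        IsECDeliveryCode F d δ (optLen F d δ) E := Nat.sInf_mem hone
    obtain ⟨E, hE⟩ := hmem2
    obtain ⟨C', hC1', hC2'⟩ := CFL_lowerBound hd hN hE
    exact Nat.sInf_le ⟨C', hC1', hC2'⟩
  refine ⟨le_antisymm (ciSup_le hub) ?_, fun d hd => le_antisymm (hub d) (hlb d hd)⟩
  have hid : optLen F (id : Fin N → Fin N) δ = shortestCodeLen F (N * (N - 1)) (2 * δ + 1) :=
    le_antisymm (hub id) (hlb id Function.bijective_id)
  calc shortestCodeLen F (N * (N - 1)) (2 * δ + 1)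
      = optLen F (id : Fin N → Fin N) δ := hid.symm
    _ ≤ ⨆ d : Fin N → Fin N, optLen F d δ :=
        le_ciSup (Set.Finite.bddAbove (Set.finite_range (fun d : Fin N → Fin N => optLen F d δ))) id
end
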